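/- Let A ∈ ℝ^{n×n}, B ∈ ℝ^{n×m}, Q ∈ ℝ^{n×n}, R ∈ ℝ^{m×m} symmetric positive semidefinite, Q_N ∈ ℝ^{n×n} symmetric, a > 0, and let P̃ ∈ ℝ^{n×n} be symmetric positive semidefinite with ‖P̃‖ ≤ ‖Q_N‖ + a. Fix σ > 0, C_m > 0, C̃ > 0, a vector x₀ ∈ ℝⁿ with ‖x₀‖² ≤ C_m, and K ∈ ℝ^{m×n} with ‖K‖_F² ≤ C̃. Define Q(x,u) := xᵀQx + uᵀRu + (Ax+Bu)ᵀP̃(Ax+Bu) and the gradient estimate G(η) := −(1/σ)·Q(x₀, −Kx₀ + ση)·η·x₀ᵀ. Set ξ₁ := (‖Q‖ + 2‖R‖C̃ + 2(‖Q_N‖ + a)(‖A‖² + 2‖B‖²C̃))·C_m^{3/2}, ξ₂ := 2(‖R‖ + 2(‖Q_N‖ + a)‖B‖²)·C_m^{1/2}, and ξ₃ := ξ₁²m/σ² + 2ξ₁ξ₂·m(m+2) + σ²ξ₂²·m(m+2)(m+4). Then for η a standard Gaussian vector on ℝ^m, 𝔼_η[‖G(η)‖_F²] ≤ ξ₃.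 -/

import Mathlib

open Matrix BigOperators MeasureTheory

/-- Spectral norm (operator norm induced by Euclidean norms). -/
noncomputable def sNorm {m n : ℕ} (M : Matrix (Fin m) (Fin n) ℝ) : ℝ :=
  ‖LinearMap.toContinuousLinearMap (Matrix.toEuclideanLin M)‖

/-- Frobenius norm. -/
noncomputable def fNorm {m n : ℕ} (M : Matrix (Fin m) (Fin n) ℝ) : ℝ :=
  Real.sqrt (∑ i, ∑ j, (M i j) ^ 2)

/-- `P`-induced norm: `‖X‖_P = sup_{z ≠ 0} √(zᵀXᵀPXz / zᵀPz)`. -/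
noncomputable def pNorm {n : ℕ} (P X : Matrix (Fin n) (Fin n) ℝ) : ℝ :=
  ⨆ z : {v : Fin n → ℝ // v ≠ 0},
    Real.sqrt ((z.1 ⬝ᵥ (Xᵀ * P * X).mulVec z.1) / (z.1 ⬝ᵥ P.mulVec z.1))

/-- Smallest eigenvalue of a symmetric matrix (as a Rayleigh-quotient infimum). -/
noncomputable def lamMin {n : ℕ} (M : Matrix (Fin n) (Fin n) ℝ) : ℝ :=
  ⨅ v : {v : Fin n → ℝ // v ⬝ᵥ v = 1}, v.1 ⬝ᵥ M.mulVec v.1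

/-- Largest eigenvalue of a symmetric matrix (as a Rayleigh-quotient supremum). -/
noncomputable def lamMax {n : ℕ} (M : Matrix (Fin n) (Fin n) ℝ) : ℝ :=
  ⨆ v : {v : Fin n → ℝ // v ⬝ᵥ v = 1}, v.1 ⬝ᵥ M.mulVec v.1

/-- Condition number `κ_M = λ_max(M)/λ_min(M)`. -/
noncomputable def condNum {n : ℕ} (M : Matrix (Fin n) (Fin n) ℝ) : ℝ :=
  lamMax M / lamMin M

/-- Smallest singular value. -/
noncomputable def sigMin {m n : ℕ} (M : Matrix (Fin m) (Fin n) ℝ) : ℝ :=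
  Real.sqrt (lamMin (Mᵀ * M))

/-- Spectral radius: supremum of moduli of (complex) eigenvalues. -/
noncomputable def specRad {n : ℕ} (M : Matrix (Fin n) (Fin n) ℝ) : ℝ :=
  ⨆ μ : spectrum ℂ (M.map ((↑) : ℝ → ℂ)), ‖(μ.1 : ℂ)‖


/-- The quadratic `Q`-function `Q(x,u) = xᵀQx + uᵀRu + (Ax+Bu)ᵀP̃(Ax+Bu)`. -/
noncomputable def qFun {n m : ℕ} (A Q P : Matrix (Fin n) (Fin n) ℝ)
    (B : Matrix (Fin n) (Fin m) ℝ) (R : Matrix (Fin m) (Fin m) ℝ)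
    (x : Fin n → ℝ) (u : Fin m → ℝ) : ℝ :=
  x ⬝ᵥ Q.mulVec x + u ⬝ᵥ R.mulVec u
    + (A.mulVec x + B.mulVec u) ⬝ᵥ P.mulVec (A.mulVec x + B.mulVec u)


open ProbabilityTheory Real Set
open scoped NNReal ENNReal

section Helpers


lemma gauss_pdf_form (x : ℝ) : gaussianPDFReal 0 1 x = (Real.sqrt (2*π))⁻¹ * Real.exp (-(1/2) * x^2) := by
  simp only [gaussianPDFReal, NNReal.coe_one, mul_one, sub_zero]
  ring_nf

lemma integral_pow_gauss (p : ℕ) (hp : Even p) :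
    ∫ x, x ^ p ∂(gaussianReal 0 1)
      = (Real.sqrt (2*π))⁻¹ * (2 * ((1/2:ℝ) ^ (-((p:ℝ)+1)/2) * (1/2) * Real.Gamma (((p:ℝ)+1)/2))) := by
  rw [gaussianReal_of_var_ne_zero 0 one_ne_zero]
  have hd : gaussianPDF 0 1 = fun x => ((Real.toNNReal (gaussianPDFReal 0 1 x) : ℝ≥0) : ℝ≥0∞) := rfl
  rw [hd, integral_withDensity_eq_integral_smul
    ((measurable_gaussianPDFReal 0 1).real_toNNReal)]
  have h1 : (fun x : ℝ => (Real.toNNReal (gaussianPDFReal 0 1 x)) • x ^ p)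
      = fun x => (Real.sqrt (2*π))⁻¹ * ((fun y : ℝ => y ^ p * Real.exp (-(1/2) * y^2)) |x|) := by
    ext x
    rw [NNReal.smul_def, Real.coe_toNNReal _ (gaussianPDFReal_nonneg _ _ _), gauss_pdf_form]
    simp only [smul_eq_mul]
    rw [hp.pow_abs, sq_abs]
    ring
  rw [h1, integral_const_mul, integral_comp_abs (f := fun y : ℝ => y ^ p * Real.exp (-(1/2) * y^2))]
  have h2 : ∫ x in Ioi (0:ℝ), x ^ p * Real.exp (-(1/2) * x^2)
      = (1/2:ℝ) ^ (-((p:ℝ)+1)/2) * (1/2) * Real.Gamma (((p:ℝ)+1)/2) := by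
    have h3 : ∫ x in Ioi (0:ℝ), x ^ p * Real.exp (-(1/2) * x^2)
        = ∫ x in Ioi (0:ℝ), x ^ ((p:ℝ)) * Real.exp (-(1/2) * x ^ (2:ℝ)) := by
      refine setIntegral_congr_fun measurableSet_Ioi (fun x hx => ?_)
      rw [Real.rpow_natCast, Real.rpow_two]
    rw [h3, integral_rpow_mul_exp_neg_mul_rpow zero_lt_two
      (by exact_mod_cast neg_one_lt_zero.trans_le (Nat.cast_nonneg p)) (by norm_num)]
  rw [h2]


lemma two_rpow_half_mul (k : ℕ) : (2:ℝ) ^ ((k:ℝ) + 1/2) = 2^k * Real.sqrt 2 := by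
  rw [Real.rpow_add two_pos, Real.rpow_natCast, ← Real.sqrt_eq_rpow]

lemma inv_half_rpow' (y : ℝ) : ((1:ℝ)/2) ^ (-y) = 2 ^ y := by
  rw [one_div, Real.inv_rpow (by norm_num : (0:ℝ) ≤ 2), Real.rpow_neg (by norm_num : (0:ℝ) ≤ 2),
    inv_inv]

lemma sqrt_two_pi : Real.sqrt (2*π) = Real.sqrt 2 * Real.sqrt π :=
  Real.sqrt_mul (by norm_num) _

lemma gauss_m2 : ∫ x, x^2 ∂(gaussianReal 0 1) = 1 := by
  rw [integral_pow_gauss 2 (by decide)]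
  have he : (-(((2:ℕ):ℝ)+1)/2) = -((1:ℝ) + 1/2) := by push_cast; norm_num
  have he2 : ((((2:ℕ):ℝ))+1)/2 = 1/2 + 1 := by push_cast; norm_num
  rw [he, he2, inv_half_rpow', Real.Gamma_add_one (by norm_num), Real.Gamma_one_half_eq,
    show ((1:ℝ) + 1/2) = ((1:ℕ):ℝ) + 1/2 by norm_num, two_rpow_half_mul, sqrt_two_pi]
  have h2 : Real.sqrt 2 > 0 := Real.sqrt_pos.mpr (by norm_num)
  have hp : Real.sqrt π > 0 := Real.sqrt_pos.mpr Real.pi_pos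
  field_simp

lemma gauss_m4 : ∫ x, x^4 ∂(gaussianReal 0 1) = 3 := by
  rw [integral_pow_gauss 4 (by decide)]
  have he : (-(((4:ℕ):ℝ)+1)/2) = -((2:ℝ) + 1/2) := by push_cast; norm_num
  have he2 : ((((4:ℕ):ℝ))+1)/2 = (1/2 + 1) + 1 := by push_cast; norm_num
  rw [he, he2, inv_half_rpow', Real.Gamma_add_one (by norm_num), Real.Gamma_add_one (by norm_num),
    Real.Gamma_one_half_eq,
    show ((2:ℝ) + 1/2) = ((2:ℕ):ℝ) + 1/2 by norm_num, two_rpow_half_mul, sqrt_two_pi]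
  have h2 : Real.sqrt 2 > 0 := Real.sqrt_pos.mpr (by norm_num)
  have hp : Real.sqrt π > 0 := Real.sqrt_pos.mpr Real.pi_pos
  field_simp
  ring

lemma gauss_m6 : ∫ x, x^6 ∂(gaussianReal 0 1) = 15 := by
  rw [integral_pow_gauss 6 (by decide)]
  have he : (-(((6:ℕ):ℝ)+1)/2) = -((3:ℝ) + 1/2) := by push_cast; norm_num
  have he2 : ((((6:ℕ):ℝ))+1)/2 = ((1/2 + 1) + 1) + 1 := by push_cast; norm_num
  rw [he, he2, inv_half_rpow', Real.Gamma_add_one (by norm_num), Real.Gamma_add_one (by norm_num),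
    Real.Gamma_add_one (by norm_num), Real.Gamma_one_half_eq,
    show ((3:ℝ) + 1/2) = ((3:ℕ):ℝ) + 1/2 by norm_num, two_rpow_half_mul, sqrt_two_pi]
  have h2 : Real.sqrt 2 > 0 := Real.sqrt_pos.mpr (by norm_num)
  have hp : Real.sqrt π > 0 := Real.sqrt_pos.mpr Real.pi_pos
  field_simp
  ring

lemma integrable_pow_gauss (p : ℕ) : Integrable (fun x : ℝ => x ^ p) (gaussianReal 0 1) := by
  rw [gaussianReal_of_var_ne_zero 0 one_ne_zero]
  rw [integrable_withDensity_iff (measurable_gaussianPDF 0 1)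
    (Filter.Eventually.of_forall fun x => ENNReal.ofReal_lt_top)]
  have : (fun x : ℝ => x ^ p * (gaussianPDF 0 1 x).toReal)
      = fun x => (Real.sqrt (2*π))⁻¹ * (x ^ p * Real.exp (-(1/2) * x^2)) := by
    ext x
    rw [gaussianPDF, ENNReal.toReal_ofReal (gaussianPDFReal_nonneg _ _ _), gauss_pdf_form]
    ring
  rw [this]
  apply Integrable.const_mul
  have h := integrable_rpow_mul_exp_neg_mul_sq (b := 1/2) (by norm_num) (s := (p:ℝ))
    (by exact_mod_cast neg_one_lt_zero.trans_le (Nat.cast_nonneg p))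
  simpa [Real.rpow_natCast] using h

noncomputable def Gm : Measure ℝ := gaussianReal 0 1
noncomputable def Pim (m : ℕ) : Measure (Fin m → ℝ) := Measure.pi fun _ => Gm

instance : IsProbabilityMeasure Gm := by unfold Gm; infer_instance
instance (m : ℕ) : IsProbabilityMeasure (Pim m) := by unfold Pim; infer_instance

lemma symm_apply_eq_cons {m : ℕ} (z : ℝ × (Fin m → ℝ)) :
    (MeasurableEquiv.piFinSuccAbove (fun _ : Fin (m+1) => ℝ) 0).symm z = Fin.cons z.1 z.2 := by
  rw [MeasurableEquiv.piFinSuccAbove_symm_apply]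
  simp [Fin.insertNthEquiv, Fin.insertNth_zero]

lemma peel_integral {m : ℕ} (f : (Fin (m+1) → ℝ) → ℝ) :
    ∫ η, f η ∂(Pim (m+1)) = ∫ z : ℝ × (Fin m → ℝ), f (Fin.cons z.1 z.2) ∂(Gm.prod (Pim m)) := by
  have h := (measurePreserving_piFinSuccAbove (fun _ : Fin (m+1) => Gm) 0).symm
  simp only [Pim]
  rw [← h.integral_comp']
  refine integral_congr_ae (Filter.Eventually.of_forall fun z => ?_)
  simp only [symm_apply_eq_cons]

lemma peel_integrable {m : ℕ} (f : (Fin (m+1) → ℝ) → ℝ)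
    (h : Integrable (fun z : ℝ × (Fin m → ℝ) => f (Fin.cons z.1 z.2)) (Gm.prod (Pim m))) :
    Integrable f (Pim (m+1)) := by
  have hmp := (measurePreserving_piFinSuccAbove (fun _ : Fin (m+1) => Gm) 0).symm
  simp only [Pim] at h ⊢
  rw [← hmp.integrable_comp_emb (MeasurableEquiv.measurableEmbedding _)]
  convert h using 1
  ext z
  simp only [Function.comp_apply, symm_apply_eq_cons]


lemma integrable_pow_Gm (p : ℕ) : Integrable (fun x : ℝ => x ^ p) Gm := integrable_pow_gauss p
lemma Gm_m2 : ∫ x, x^2 ∂Gm = 1 := gauss_m2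
lemma Gm_m4 : ∫ x, x^4 ∂Gm = 3 := gauss_m4
lemma Gm_m6 : ∫ x, x^6 ∂Gm = 15 := gauss_m6

lemma cons_sum_sq {m : ℕ} (z : ℝ × (Fin m → ℝ)) :
    (∑ i : Fin (m+1), (Fin.cons z.1 z.2 : Fin (m+1) → ℝ) i ^ 2) = z.1^2 + ∑ j, (z.2 j)^2 := by
  rw [Fin.sum_univ_succ]
  simp

lemma chi_all (m : ℕ) :
    (Integrable (fun η : Fin m → ℝ => ∑ i, η i ^ 2) (Pim m) ∧
     Integrable (fun η : Fin m → ℝ => (∑ i, η i ^ 2)^2) (Pim m) ∧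
     Integrable (fun η : Fin m → ℝ => (∑ i, η i ^ 2)^3) (Pim m)) ∧
    (∫ η, (∑ i, η i ^2) ∂(Pim m)) = m ∧
    (∫ η, (∑ i, η i ^2)^2 ∂(Pim m)) = m*(m+2) ∧
    (∫ η, (∑ i, η i ^2)^3 ∂(Pim m)) = m*(m+2)*(m+4) := by
  induction m with
  | zero =>
    have h0 : (fun η : Fin 0 → ℝ => ∑ i, η i ^ 2) = fun _ => (0:ℝ) := by
      ext η; simp
    refine ⟨⟨?_, ?_, ?_⟩, ?_, ?_, ?_⟩ <;> simp
  | succ m ih =>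
    obtain ⟨⟨hi1, hi2, hi3⟩, hv1, hv2, hv3⟩ := ih
    set S : (Fin m → ℝ) → ℝ := fun y => ∑ j, (y j)^2 with hS
    -- integrable building blocks on the product
    have hc : IsProbabilityMeasure (Pim m) := inferInstance
    have hone : Integrable (fun _ : Fin m → ℝ => (1:ℝ)) (Pim m) := integrable_const 1
    have hP : ∀ a b : ℕ, Integrable (fun y => (S y)^b) (Pim m) →
        Integrable (fun z : ℝ × (Fin m → ℝ) => z.1 ^ a * (S z.2)^b) (Gm.prod (Pim m)) :=
      fun a b hb => (integrable_pow_Gm a).mul_prod hb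
    have hS0 : Integrable (fun y => (S y)^0) (Pim m) := by simpa using hone
    have hS1 : Integrable (fun y => (S y)^1) (Pim m) := by simpa using hi1
    -- expansions
    have key : ∀ (k : ℕ), ∀ z : ℝ × (Fin m → ℝ),
        ((∑ i : Fin (m+1), (Fin.cons z.1 z.2 : Fin (m+1) → ℝ) i ^ 2))^k
          = (z.1^2 + S z.2)^k := by
      intro k z; rw [cons_sum_sq]
    -- k = 1
    have e1 : (fun z : ℝ × (Fin m → ℝ) => (∑ i : Fin (m+1), (Fin.cons z.1 z.2 : Fin (m+1) → ℝ) i ^ 2))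
        = fun z => z.1^2 * (S z.2)^0 + z.1^0 * (S z.2)^1 := by
      ext z
      have := key 1 z
      simp only [pow_one] at this
      rw [this]; ring
    have int1 : Integrable (fun z : ℝ × (Fin m → ℝ) =>
        (∑ i : Fin (m+1), (Fin.cons z.1 z.2 : Fin (m+1) → ℝ) i ^ 2)) (Gm.prod (Pim m)) := by
      rw [e1]; exact (hP 2 0 hS0).add (hP 0 1 hS1)
    have I1 : Integrable (fun η : Fin (m+1) → ℝ => ∑ i, η i ^ 2) (Pim (m+1)) :=
      peel_integrable _ int1
    have V1 : (∫ η, (∑ i, η i ^2) ∂(Pim (m+1))) = (m+1 : ℕ) := by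
      rw [peel_integral (fun η : Fin (m+1) → ℝ => ∑ i, η i ^ 2)]
      rw [show (fun z : ℝ × (Fin m → ℝ) => ∑ i : Fin (m+1), (Fin.cons z.1 z.2 : Fin (m+1) → ℝ) i ^ 2)
        = fun z => z.1^2 * (S z.2)^0 + z.1^0 * (S z.2)^1 from e1]
      rw [integral_add (hP 2 0 hS0) (hP 0 1 hS1),
        integral_prod_mul (μ := Gm) (ν := Pim m) (fun x : ℝ => x^2) (fun y => S y ^ 0),
        integral_prod_mul (μ := Gm) (ν := Pim m) (fun x : ℝ => x^0) (fun y => S y ^ 1)]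
      simp only [pow_zero, pow_one, Gm_m2]
      rw [hv1]
      have : ∫ x, (1:ℝ) ∂Gm = 1 := by simp
      rw [integral_const, integral_const]
      simp
      push_cast
      ring
    have hS2 : Integrable (fun y => (S y)^2) (Pim m) := by simpa only [hS] using hi2
    have hS3 : Integrable (fun y => (S y)^3) (Pim m) := by simpa only [hS] using hi3
    have hv1' : ∫ y, (S y)^1 ∂(Pim m) = m := by simpa only [hS, pow_one] using hv1
    have hv2' : ∫ y, (S y)^2 ∂(Pim m) = m*(m+2) := by simpa only [hS] using hv2
    have hv3' : ∫ y, (S y)^3 ∂(Pim m) = m*(m+2)*(m+4) := by simpa only [hS] using hv3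
    have hv0' : ∫ y, (S y)^0 ∂(Pim m) = 1 := by simp
    have g2 : ∫ x, x^2 ∂Gm = 1 := Gm_m2
    have g4 : ∫ x, x^4 ∂Gm = 3 := Gm_m4
    have g6 : ∫ x, x^6 ∂Gm = 15 := Gm_m6
    have g0 : ∫ x, (x:ℝ)^0 ∂Gm = 1 := by simp
    -- k = 2
    have e2 : (fun z : ℝ × (Fin m → ℝ) =>
        (∑ i : Fin (m+1), (Fin.cons z.1 z.2 : Fin (m+1) → ℝ) i ^ 2)^2)
        = fun z => z.1^4 * (S z.2)^0 + ((2:ℝ) * (z.1^2 * (S z.2)^1) + z.1^0 * (S z.2)^2) := by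
      ext z
      rw [key 2 z]; ring
    have int2' : Integrable (fun z : ℝ × (Fin m → ℝ) =>
        z.1^4 * (S z.2)^0 + ((2:ℝ) * (z.1^2 * (S z.2)^1) + z.1^0 * (S z.2)^2)) (Gm.prod (Pim m)) :=
      (hP 4 0 hS0).add (((hP 2 1 hS1).const_mul 2).add (hP 0 2 hS2))
    have int2 := int2'
    rw [← e2] at int2
    have I2 : Integrable (fun η : Fin (m+1) → ℝ => (∑ i, η i ^ 2)^2) (Pim (m+1)) :=
      peel_integrable _ int2
    have V2 : (∫ η, (∑ i, η i ^2)^2 ∂(Pim (m+1))) = (m+1 : ℕ) * ((m+1:ℕ) + 2) := by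
      rw [peel_integral (fun η : Fin (m+1) → ℝ => (∑ i, η i ^ 2)^2), e2]
      have hb1 : Integrable (fun z : ℝ × (Fin m → ℝ) =>
          (2:ℝ) * (z.1^2 * (S z.2)^1) + z.1^0 * (S z.2)^2) (Gm.prod (Pim m)) :=
        ((hP 2 1 hS1).const_mul 2).add (hP 0 2 hS2)
      have hb2 : Integrable (fun z : ℝ × (Fin m → ℝ) =>
          (2:ℝ) * (z.1^2 * (S z.2)^1)) (Gm.prod (Pim m)) := (hP 2 1 hS1).const_mul 2
      rw [integral_add (hP 4 0 hS0) hb1]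
      rw [integral_add hb2 (hP 0 2 hS2)]
      rw [integral_const_mul,
        integral_prod_mul (μ := Gm) (ν := Pim m) (fun x : ℝ => x^4) (fun y => S y ^ 0),
        integral_prod_mul (μ := Gm) (ν := Pim m) (fun x : ℝ => x^2) (fun y => S y ^ 1),
        integral_prod_mul (μ := Gm) (ν := Pim m) (fun x : ℝ => x^0) (fun y => S y ^ 2),
        g2, g4, g0, hv0', hv1', hv2']
      push_cast
      ring
    -- k = 3
    have e3 : (fun z : ℝ × (Fin m → ℝ) =>
        (∑ i : Fin (m+1), (Fin.cons z.1 z.2 : Fin (m+1) → ℝ) i ^ 2)^3)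
        = fun z => z.1^6 * (S z.2)^0 + ((3:ℝ) * (z.1^4 * (S z.2)^1)
            + ((3:ℝ) * (z.1^2 * (S z.2)^2) + z.1^0 * (S z.2)^3)) := by
      ext z
      rw [key 3 z]; ring
    have hint3 : Integrable (fun z : ℝ × (Fin m → ℝ) =>
        z.1^6 * (S z.2)^0 + ((3:ℝ) * (z.1^4 * (S z.2)^1)
          + ((3:ℝ) * (z.1^2 * (S z.2)^2) + z.1^0 * (S z.2)^3))) (Gm.prod (Pim m)) :=
      (hP 6 0 hS0).add (((hP 4 1 hS1).const_mul 3).add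
        (((hP 2 2 hS2).const_mul 3).add (hP 0 3 hS3)))
    have int3 := hint3
    rw [← e3] at int3
    have I3 : Integrable (fun η : Fin (m+1) → ℝ => (∑ i, η i ^ 2)^3) (Pim (m+1)) :=
      peel_integrable _ int3
    have V3 : (∫ η, (∑ i, η i ^2)^3 ∂(Pim (m+1))) = (m+1 : ℕ) * ((m+1:ℕ) + 2) * ((m+1:ℕ) + 4) := by
      rw [peel_integral (fun η : Fin (m+1) → ℝ => (∑ i, η i ^ 2)^3), e3]
      have hc1 : Integrable (fun z : ℝ × (Fin m → ℝ) =>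
          (3:ℝ) * (z.1^4 * (S z.2)^1)) (Gm.prod (Pim m)) := (hP 4 1 hS1).const_mul 3
      have hc2 : Integrable (fun z : ℝ × (Fin m → ℝ) =>
          (3:ℝ) * (z.1^2 * (S z.2)^2)) (Gm.prod (Pim m)) := (hP 2 2 hS2).const_mul 3
      have hc3 : Integrable (fun z : ℝ × (Fin m → ℝ) =>
          (3:ℝ) * (z.1^2 * (S z.2)^2) + z.1^0 * (S z.2)^3) (Gm.prod (Pim m)) :=
        hc2.add (hP 0 3 hS3)
      have hc4 : Integrable (fun z : ℝ × (Fin m → ℝ) =>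
          (3:ℝ) * (z.1^4 * (S z.2)^1) + ((3:ℝ) * (z.1^2 * (S z.2)^2) + z.1^0 * (S z.2)^3))
          (Gm.prod (Pim m)) := hc1.add hc3
      rw [integral_add (hP 6 0 hS0) hc4]
      rw [integral_add hc1 hc3]
      rw [integral_add hc2 (hP 0 3 hS3)]
      rw [integral_const_mul, integral_const_mul,
        integral_prod_mul (μ := Gm) (ν := Pim m) (fun x : ℝ => x^6) (fun y => S y ^ 0),
        integral_prod_mul (μ := Gm) (ν := Pim m) (fun x : ℝ => x^4) (fun y => S y ^ 1),
        integral_prod_mul (μ := Gm) (ν := Pim m) (fun x : ℝ => x^2) (fun y => S y ^ 2),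
        integral_prod_mul (μ := Gm) (ν := Pim m) (fun x : ℝ => x^0) (fun y => S y ^ 3),
        g2, g4, g6, g0, hv0', hv1', hv2', hv3']
      push_cast
      ring
    exact ⟨⟨I1, I2, I3⟩, V1, V2, V3⟩

lemma sNorm_nonneg {m n : ℕ} (M : Matrix (Fin m) (Fin n) ℝ) : 0 ≤ sNorm M := norm_nonneg _

lemma euclidean_norm_symm {k : ℕ} (v : Fin k → ℝ) :
    ‖(WithLp.equiv 2 (Fin k → ℝ)).symm v‖ = Real.sqrt (∑ i, (v i)^2) := by
  rw [EuclideanSpace.norm_eq]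
  congr 1
  refine Finset.sum_congr rfl fun i _ => ?_
  rw [Real.norm_eq_abs, sq_abs]
  rfl

lemma mulVec_sq_le {m n : ℕ} (M : Matrix (Fin m) (Fin n) ℝ) (v : Fin n → ℝ) :
    ∑ i, (M.mulVec v i)^2 ≤ sNorm M ^ 2 * ∑ i, (v i)^2 := by
  have h := (LinearMap.toContinuousLinearMap (Matrix.toEuclideanLin M)).le_opNorm
    ((WithLp.equiv 2 (Fin n → ℝ)).symm v)
  rw [LinearMap.coe_toContinuousLinearMap'] at h
  change ‖(WithLp.equiv 2 (Fin m → ℝ)).symm (M.mulVec v)‖ ≤ _ at h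
  rw [euclidean_norm_symm, euclidean_norm_symm] at h
  have h1 : 0 ≤ ∑ i, (M.mulVec v i)^2 := Finset.sum_nonneg fun _ _ => sq_nonneg _
  have h2 : 0 ≤ ∑ i, (v i)^2 := Finset.sum_nonneg fun _ _ => sq_nonneg _
  have := mul_self_le_mul_self (Real.sqrt_nonneg _) h
  rw [Real.mul_self_sqrt h1] at this
  calc ∑ i, (M.mulVec v i)^2 ≤ (sNorm M * Real.sqrt (∑ i, (v i)^2))
      * (sNorm M * Real.sqrt (∑ i, (v i)^2)) := this
    _ = sNorm M ^2 * (Real.sqrt (∑ i, (v i)^2) * Real.sqrt (∑ i, (v i)^2)) := by ring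
    _ = sNorm M ^2 * ∑ i, (v i)^2 := by rw [Real.mul_self_sqrt h2]

lemma quad_le {n : ℕ} (M : Matrix (Fin n) (Fin n) ℝ) (v : Fin n → ℝ) :
    v ⬝ᵥ M.mulVec v ≤ sNorm M * ∑ i, (v i)^2 := by
  have hip : v ⬝ᵥ M.mulVec v
      = inner ℝ ((WithLp.equiv 2 (Fin n → ℝ)).symm v)
          ((WithLp.equiv 2 (Fin n → ℝ)).symm (M.mulVec v)) := by
    rw [PiLp.inner_apply]
    simp [dotProduct, RCLike.inner_apply, mul_comm]
  rw [hip]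
  have hcs := real_inner_le_norm ((WithLp.equiv 2 (Fin n → ℝ)).symm v)
    ((WithLp.equiv 2 (Fin n → ℝ)).symm (M.mulVec v))
  have h := (LinearMap.toContinuousLinearMap (Matrix.toEuclideanLin M)).le_opNorm
    ((WithLp.equiv 2 (Fin n → ℝ)).symm v)
  rw [LinearMap.coe_toContinuousLinearMap'] at h
  change ‖(WithLp.equiv 2 (Fin n → ℝ)).symm (M.mulVec v)‖ ≤ _ at h
  have hnv : ‖(WithLp.equiv 2 (Fin n → ℝ)).symm v‖^2 = ∑ i, (v i)^2 := by
    rw [euclidean_norm_symm, Real.sq_sqrt (Finset.sum_nonneg fun _ _ => sq_nonneg _)]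
  calc inner ℝ ((WithLp.equiv 2 (Fin n → ℝ)).symm v) ((WithLp.equiv 2 (Fin n → ℝ)).symm (M.mulVec v))
      ≤ ‖(WithLp.equiv 2 (Fin n → ℝ)).symm v‖ * ‖(WithLp.equiv 2 (Fin n → ℝ)).symm (M.mulVec v)‖ := hcs
    _ ≤ ‖(WithLp.equiv 2 (Fin n → ℝ)).symm v‖ * (sNorm M * ‖(WithLp.equiv 2 (Fin n → ℝ)).symm v‖) := by
        apply mul_le_mul_of_nonneg_left h (norm_nonneg _)
    _ = sNorm M * ‖(WithLp.equiv 2 (Fin n → ℝ)).symm v‖^2 := by ring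
    _ = sNorm M * ∑ i, (v i)^2 := by rw [hnv]

lemma frob_mulVec_le {m n : ℕ} (K : Matrix (Fin m) (Fin n) ℝ) (v : Fin n → ℝ) :
    ∑ i, (K.mulVec v i)^2 ≤ fNorm K ^2 * ∑ j, (v j)^2 := by
  have hf : fNorm K ^ 2 = ∑ i, ∑ j, (K i j)^2 :=
    Real.sq_sqrt (Finset.sum_nonneg fun _ _ => Finset.sum_nonneg fun _ _ => sq_nonneg _)
  rw [hf, Finset.sum_mul]
  refine Finset.sum_le_sum fun i _ => ?_
  have h := Finset.sum_mul_sq_le_sq_mul_sq Finset.univ (fun j => K i j) v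
  calc (K.mulVec v i)^2 = (∑ j, K i j * v j)^2 := by rw [Matrix.mulVec, dotProduct]
    _ ≤ (∑ j, K i j ^2) * ∑ j, v j ^2 := h

lemma psd_quad_nonneg {n : ℕ} {M : Matrix (Fin n) (Fin n) ℝ} (hM : M.PosSemidef)
    (v : Fin n → ℝ) : 0 ≤ v ⬝ᵥ M.mulVec v := by
  have := hM.dotProduct_mulVec_nonneg v
  simpa using this

section Bound
variable {n m : ℕ}
  (A Q QN Ptil : Matrix (Fin n) (Fin n) ℝ) (B : Matrix (Fin n) (Fin m) ℝ)
  (R : Matrix (Fin m) (Fin m) ℝ)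

lemma qFun_nonneg (hQ : Q.PosSemidef) (hR : R.PosSemidef) (hP : Ptil.PosSemidef)
    (x : Fin n → ℝ) (u : Fin m → ℝ) : 0 ≤ qFun A Q Ptil B R x u := by
  have h1 := psd_quad_nonneg hQ x
  have h2 := psd_quad_nonneg hR u
  have h3 := psd_quad_nonneg hP (A.mulVec x + B.mulVec u)
  unfold qFun; linarith

lemma qFun_le (hPtil : Ptil.PosSemidef) (a σ C_m Ctil : ℝ)
    (hPtilnorm : sNorm Ptil ≤ sNorm QN + a)
    (hσ : 0 < σ) (hCm : 0 < C_m) (hCtil : 0 < Ctil)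
    (x₀ : Fin n → ℝ) (hx₀ : ∑ i, (x₀ i) ^ 2 ≤ C_m)
    (K : Matrix (Fin m) (Fin n) ℝ) (hK : fNorm K ^ 2 ≤ Ctil) (η : Fin m → ℝ) :
    qFun A Q Ptil B R x₀ (-(K.mulVec x₀) + σ • η)
      ≤ (sNorm Q + 2 * sNorm R * Ctil
          + 2 * (sNorm QN + a) * (sNorm A ^ 2 + 2 * sNorm B ^ 2 * Ctil)) * C_m
        + (2 * (sNorm R + 2 * (sNorm QN + a) * sNorm B ^ 2)) * σ^2 * ∑ i, (η i)^2 := by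
  set u : Fin m → ℝ := -(K.mulVec x₀) + σ • η with hu
  set t : ℝ := ∑ i, (η i)^2 with ht
  have ht0 : 0 ≤ t := Finset.sum_nonneg fun _ _ => sq_nonneg _
  have hX0 : 0 ≤ ∑ i, (x₀ i)^2 := Finset.sum_nonneg fun _ _ => sq_nonneg _
  -- bound on ∑ u²
  have hKx : ∑ i, (K.mulVec x₀ i)^2 ≤ Ctil * C_m := by
    calc ∑ i, (K.mulVec x₀ i)^2 ≤ fNorm K ^2 * ∑ j, (x₀ j)^2 := frob_mulVec_le K x₀
      _ ≤ Ctil * C_m := by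
          apply mul_le_mul hK hx₀ hX0 hCtil.le
  have hus : ∑ i, (u i)^2 ≤ 2 * (Ctil * C_m) + 2 * σ^2 * t := by
    have h1 : ∑ i, (u i)^2 ≤ ∑ i, (2 * (K.mulVec x₀ i)^2 + 2 * σ^2 * (η i)^2) := by
      refine Finset.sum_le_sum fun i _ => ?_
      have : u i = -(K.mulVec x₀ i) + σ * η i := rfl
      rw [this]
      nlinarith [sq_nonneg (K.mulVec x₀ i + σ * η i)]
    rw [Finset.sum_add_distrib, ← Finset.mul_sum, ← Finset.mul_sum] at h1
    nlinarith [hKx]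
  have husnn : 0 ≤ ∑ i, (u i)^2 := Finset.sum_nonneg fun _ _ => sq_nonneg _
  -- term 1
  have hT1 : x₀ ⬝ᵥ Q.mulVec x₀ ≤ sNorm Q * C_m := by
    calc x₀ ⬝ᵥ Q.mulVec x₀ ≤ sNorm Q * ∑ i, (x₀ i)^2 := quad_le Q x₀
      _ ≤ sNorm Q * C_m := mul_le_mul_of_nonneg_left hx₀ (sNorm_nonneg Q)
  -- term 2
  have hT2 : u ⬝ᵥ R.mulVec u ≤ sNorm R * (2 * (Ctil * C_m) + 2 * σ^2 * t) := by
    calc u ⬝ᵥ R.mulVec u ≤ sNorm R * ∑ i, (u i)^2 := quad_le R u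
      _ ≤ _ := mul_le_mul_of_nonneg_left hus (sNorm_nonneg R)
  -- term 3
  set w : Fin n → ℝ := A.mulVec x₀ + B.mulVec u with hw
  have hws : ∑ i, (w i)^2 ≤ 2 * (sNorm A^2 * C_m) + 2 * (sNorm B^2 * (2 * (Ctil * C_m) + 2 * σ^2 * t)) := by
    have h1 : ∑ i, (w i)^2 ≤ ∑ i, (2 * (A.mulVec x₀ i)^2 + 2 * (B.mulVec u i)^2) := by
      refine Finset.sum_le_sum fun i _ => ?_
      have : w i = A.mulVec x₀ i + B.mulVec u i := rfl
      rw [this]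
      nlinarith [sq_nonneg (A.mulVec x₀ i - B.mulVec u i)]
    rw [Finset.sum_add_distrib, ← Finset.mul_sum, ← Finset.mul_sum] at h1
    have hA := mulVec_sq_le A x₀
    have hB := mulVec_sq_le B u
    have hA2 : sNorm A ^2 * ∑ i, (x₀ i)^2 ≤ sNorm A^2 * C_m :=
      mul_le_mul_of_nonneg_left hx₀ (sq_nonneg _)
    have hB2 : sNorm B ^2 * ∑ i, (u i)^2 ≤ sNorm B^2 * (2 * (Ctil * C_m) + 2 * σ^2 * t) :=
      mul_le_mul_of_nonneg_left hus (sq_nonneg _)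
    linarith
  have hwsnn : 0 ≤ ∑ i, (w i)^2 := Finset.sum_nonneg fun _ _ => sq_nonneg _
  have hQNa : 0 ≤ sNorm QN + a := le_trans (sNorm_nonneg Ptil) hPtilnorm
  have hT3 : w ⬝ᵥ Ptil.mulVec w
      ≤ (sNorm QN + a) * (2 * (sNorm A^2 * C_m) + 2 * (sNorm B^2 * (2 * (Ctil * C_m) + 2 * σ^2 * t))) := by
    calc w ⬝ᵥ Ptil.mulVec w ≤ sNorm Ptil * ∑ i, (w i)^2 := quad_le Ptil w
      _ ≤ (sNorm QN + a) * ∑ i, (w i)^2 := mul_le_mul_of_nonneg_right hPtilnorm hwsnn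
      _ ≤ _ := mul_le_mul_of_nonneg_left hws hQNa
  unfold qFun
  rw [← hw]
  nlinarith [hT1, hT2, hT3]
end Bound


end Helpers

/-- Second-moment bound on the one-point gradient estimate. -/
theorem gradient_estimate_second_moment {n m : ℕ}
    (A Q QN Ptil : Matrix (Fin n) (Fin n) ℝ) (B : Matrix (Fin n) (Fin m) ℝ)
    (R : Matrix (Fin m) (Fin m) ℝ)
    (hQ : Q.PosSemidef) (hR : R.PosSemidef) (hQN : QN.IsSymm)
    (a : ℝ) (ha : 0 < a)
    (hPtil : Ptil.PosSemidef) (hPtilnorm : sNorm Ptil ≤ sNorm QN + a)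
    (σ C_m Ctil : ℝ) (hσ : 0 < σ) (hCm : 0 < C_m) (hCtil : 0 < Ctil)
    (x₀ : Fin n → ℝ) (hx₀ : ∑ i, (x₀ i) ^ 2 ≤ C_m)
    (K : Matrix (Fin m) (Fin n) ℝ) (hK : fNorm K ^ 2 ≤ Ctil)
    (ξ₁ ξ₂ ξ₃ : ℝ)
    (hξ₁ : ξ₁ = (sNorm Q + 2 * sNorm R * Ctil
      + 2 * (sNorm QN + a) * (sNorm A ^ 2 + 2 * sNorm B ^ 2 * Ctil)) * C_m ^ ((3 : ℝ) / 2))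
    (hξ₂ : ξ₂ = 2 * (sNorm R + 2 * (sNorm QN + a) * sNorm B ^ 2) * C_m ^ ((1 : ℝ) / 2))
    (hξ₃ : ξ₃ = ξ₁ ^ 2 * m / σ ^ 2 + 2 * ξ₁ * ξ₂ * ((m : ℝ) * (m + 2))
      + σ ^ 2 * ξ₂ ^ 2 * ((m : ℝ) * (m + 2) * (m + 4))) :
    (∫ η : Fin m → ℝ,
        fNorm (Matrix.of fun i j =>
          -(1 / σ) * qFun A Q Ptil B R x₀ (-(K.mulVec x₀) + σ • η) * η i * x₀ j) ^ 2
      ∂(Measure.pi fun _ : Fin m => ProbabilityTheory.gaussianReal 0 1)) ≤ ξ₃ := by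
  set κ : ℝ := sNorm Q + 2 * sNorm R * Ctil
      + 2 * (sNorm QN + a) * (sNorm A ^ 2 + 2 * sNorm B ^ 2 * Ctil) with hκ
  set β : ℝ := 2 * (sNorm R + 2 * (sNorm QN + a) * sNorm B ^ 2) with hβ
  set α : ℝ := κ * C_m with hα
  have hσ2 : (0:ℝ) < σ^2 := by positivity
  have hXnn : (0:ℝ) ≤ ∑ j, (x₀ j)^2 := Finset.sum_nonneg fun _ _ => sq_nonneg _
  set F : (Fin m → ℝ) → ℝ := fun η => fNorm (Matrix.of fun i j =>
      -(1 / σ) * qFun A Q Ptil B R x₀ (-(K.mulVec x₀) + σ • η) * η i * x₀ j) ^ 2 with hF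
  set g : (Fin m → ℝ) → ℝ := fun η => (C_m / σ^2 * α^2) * (∑ i, (η i)^2)
      + ((2 * C_m * α * β) * (∑ i, (η i)^2)^2 + (C_m * σ^2 * β^2) * (∑ i, (η i)^2)^3) with hg
  have hmeas : (Measure.pi fun _ : Fin m => ProbabilityTheory.gaussianReal 0 1) = Pim m := rfl
  rw [hmeas]
  obtain ⟨⟨hi1, hi2, hi3⟩, hv1, hv2, hv3⟩ := chi_all m
  -- value of F
  have hFval : ∀ η : Fin m → ℝ, F η = (1/σ^2) * (qFun A Q Ptil B R x₀ (-(K.mulVec x₀) + σ • η))^2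
      * ((∑ i, (η i)^2) * (∑ j, (x₀ j)^2)) := by
    intro η
    set q : ℝ := qFun A Q Ptil B R x₀ (-(K.mulVec x₀) + σ • η) with hq
    simp only [hF, fNorm, Matrix.of_apply]
    rw [Real.sq_sqrt (Finset.sum_nonneg fun _ _ => Finset.sum_nonneg fun _ _ => sq_nonneg _)]
    have hone : ∀ i : Fin m, (∑ j : Fin n, (-(1/σ) * q * η i * x₀ j)^2)
        = (1/σ^2 * q^2) * ((η i)^2 * (∑ j, (x₀ j)^2)) := by
      intro i
      calc (∑ j : Fin n, (-(1/σ) * q * η i * x₀ j)^2)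
          = ∑ j : Fin n, (1/σ^2 * q^2) * ((η i)^2 * (x₀ j)^2) :=
            Finset.sum_congr rfl (fun j _ => by ring)
        _ = (1/σ^2 * q^2) * ((η i)^2 * (∑ j, (x₀ j)^2)) := by
            rw [← Finset.mul_sum, ← Finset.mul_sum]
    rw [Finset.sum_congr rfl fun i _ => hone i]
    rw [← Finset.mul_sum, ← Finset.sum_mul]
  -- pointwise bound
  have hFle : ∀ η : Fin m → ℝ, F η ≤ g η := by
    intro η
    set q : ℝ := qFun A Q Ptil B R x₀ (-(K.mulVec x₀) + σ • η) with hq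
    set t : ℝ := ∑ i, (η i)^2 with htdef
    have ht0 : 0 ≤ t := Finset.sum_nonneg fun _ _ => sq_nonneg _
    have hq0 : 0 ≤ q := qFun_nonneg A Q Ptil B R hQ hR hPtil x₀ _
    have hqle : q ≤ α + β * σ^2 * t := by
      rw [hα, hκ, hβ]
      exact qFun_le A Q QN Ptil B R hPtil a σ C_m Ctil hPtilnorm hσ hCm hCtil x₀ hx₀ K hK η
    have hq2 : q^2 ≤ (α + β * σ^2 * t)^2 := by nlinarith
    have htX : t * ∑ j, (x₀ j)^2 ≤ t * C_m := mul_le_mul_of_nonneg_left hx₀ ht0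
    have hstep : q^2 * (t * ∑ j, (x₀ j)^2) ≤ (α + β * σ^2 * t)^2 * (t * C_m) := by
      apply mul_le_mul hq2 htX (by positivity) (by positivity)
    rw [hFval η, ← hq]
    show (1/σ^2) * q^2 * (t * ∑ j, (x₀ j)^2) ≤ g η
    have hgη : g η = (C_m / σ^2 * α^2) * t + ((2 * C_m * α * β) * t^2 + (C_m * σ^2 * β^2) * t^3) := rfl
    rw [hgη]
    have hmain : (1/σ^2) * q^2 * (t * ∑ j, (x₀ j)^2)
        ≤ (1/σ^2) * ((α + β * σ^2 * t)^2 * (t * C_m)) := by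
      rw [mul_assoc]
      apply mul_le_mul_of_nonneg_left hstep (by positivity)
    calc (1/σ^2) * q^2 * (t * ∑ j, (x₀ j)^2)
        ≤ (1/σ^2) * ((α + β * σ^2 * t)^2 * (t * C_m)) := hmain
      _ = (C_m / σ^2 * α^2) * t + ((2 * C_m * α * β) * t^2 + (C_m * σ^2 * β^2) * t^3) := by
          field_simp
          ring
  -- integrability of g
  have hint2 : Integrable (fun η : Fin m → ℝ => (2 * C_m * α * β) * (∑ i, (η i)^2)^2) (Pim m) :=
    hi2.const_mul _
  have hint3 : Integrable (fun η : Fin m → ℝ => (C_m * σ^2 * β^2) * (∑ i, (η i)^2)^3) (Pim m) :=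
    hi3.const_mul _
  have hint23 : Integrable (fun η : Fin m → ℝ => (2 * C_m * α * β) * (∑ i, (η i)^2)^2
      + (C_m * σ^2 * β^2) * (∑ i, (η i)^2)^3) (Pim m) := hint2.add hint3
  have hint1 : Integrable (fun η : Fin m → ℝ => (C_m / σ^2 * α^2) * (∑ i, (η i)^2)) (Pim m) :=
    hi1.const_mul _
  have hgint : Integrable g (Pim m) := by
    rw [hg]; exact hint1.add hint23
  -- integral of g
  have hgval : ∫ η, g η ∂(Pim m) = (C_m / σ^2 * α^2) * m
      + ((2 * C_m * α * β) * (m*(m+2)) + (C_m * σ^2 * β^2) * (m*(m+2)*(m+4))) := by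
    rw [hg]
    rw [integral_add hint1 hint23, integral_add hint2 hint3,
      integral_const_mul, integral_const_mul, integral_const_mul, hv1, hv2, hv3]
  -- compare
  have hmono : ∫ η, F η ∂(Pim m) ≤ ∫ η, g η ∂(Pim m) := by
    apply integral_mono_of_nonneg
    · exact Filter.Eventually.of_forall fun η => sq_nonneg _
    · exact hgint
    · exact Filter.Eventually.of_forall hFle
  refine le_trans (le_trans (le_of_eq ?_) hmono) ?_
  · rw [hF]
  rw [hgval, hξ₃, hξ₁, hξ₂]
  have h12 : (C_m ^ ((1:ℝ)/2))^2 = C_m := by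
    rw [← Real.rpow_natCast (C_m ^ ((1:ℝ)/2)) 2, ← Real.rpow_mul hCm.le]
    norm_num
  have hsplit : C_m ^ ((3:ℝ)/2) = C_m * C_m ^ ((1:ℝ)/2) := by
    rw [show ((3:ℝ)/2) = 1 + (1:ℝ)/2 by norm_num, Real.rpow_add hCm, Real.rpow_one]
  rw [hsplit, hα]
  apply le_of_eq
  linear_combination (-(κ^2*C_m^2*(m:ℝ)/σ^2 + 2*κ*β*C_m*((m:ℝ)*((m:ℝ)+2))
    + σ^2*β^2*((m:ℝ)*((m:ℝ)+2)*((m:ℝ)+4)))) * h12
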